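/- Let V be a real vector space, (J₁, J₂, J₃) a hypercomplex structure on V, and R : V⁴ → ℝ a curvature-like tensor satisfying R(X, Y, J₁Z, J₁W) = R(J₁X, J₁Y, Z, W) = R(X, Y, Z, W) and R(X, Y, J_αZ, J_αW) = R(J_αX, J_αY, Z, W) = −R(X, Y, Z, W) for α = 2, 3 and all X, Y, Z, W. Then R ≡ 0. (This is the pointwise algebraic content of the theorem that every pseudo-hyper-Kähler manifold is flat.) -/

import Mathlib

/-- (Pointwise content of the flatness theorem.) A curvature-like tensor `R` on a hypercomplex vector space satisfying the J-invariance identities of a pseudo-hyper-Kähler manifold vanishes identically: every pseudo-hyper-Kähler manifold is flat. -/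
theorem pseudo_hyper_Kaehler_flat
    (V : Type*) [AddCommGroup V] [Module ℝ V]
    (J1 J2 J3 : V →ₗ[ℝ] V)
    (hJ1sq : J1 ∘ₗ J1 = -LinearMap.id)
    (hJ2sq : J2 ∘ₗ J2 = -LinearMap.id)
    (hJ3sq : J3 ∘ₗ J3 = -LinearMap.id)
    (hJ12 : J1 ∘ₗ J2 = -(J2 ∘ₗ J1))
    (hJ23 : J2 ∘ₗ J3 = -(J3 ∘ₗ J2))
    (hJ31 : J3 ∘ₗ J1 = -(J1 ∘ₗ J3))
    (hJ3 : J3 = J1 ∘ₗ J2)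
    (R : V →ₗ[ℝ] V →ₗ[ℝ] V →ₗ[ℝ] V →ₗ[ℝ] ℝ)
    (hskew1 : ∀ X Y Z W, R X Y Z W = -R Y X Z W)
    (hskew2 : ∀ X Y Z W, R X Y Z W = -R X Y W Z)
    (hpair : ∀ X Y Z W, R X Y Z W = R Z W X Y)
    (hbianchi : ∀ X Y Z W, R X Y Z W + R Y Z X W + R Z X Y W = 0)
    (hRJ1a : ∀ X Y Z W, R X Y (J1 Z) (J1 W) = R X Y Z W)
    (hRJ1b : ∀ X Y Z W, R (J1 X) (J1 Y) Z W = R X Y Z W)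
    (hRJ2a : ∀ X Y Z W, R X Y (J2 Z) (J2 W) = -R X Y Z W)
    (hRJ2b : ∀ X Y Z W, R (J2 X) (J2 Y) Z W = -R X Y Z W)
    (hRJ3a : ∀ X Y Z W, R X Y (J3 Z) (J3 W) = -R X Y Z W)
    (hRJ3b : ∀ X Y Z W, R (J3 X) (J3 Y) Z W = -R X Y Z W) :
    ∀ X Y Z W, R X Y Z W = 0 := by
  -- pointwise versions of the quaternionic relations
  have sq1 : ∀ v, J1 (J1 v) = -v := fun v => by
    have := LinearMap.ext_iff.mp hJ1sq v
    simpa [LinearMap.comp_apply] using this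
  have sq2 : ∀ v, J2 (J2 v) = -v := fun v => by
    have := LinearMap.ext_iff.mp hJ2sq v
    simpa [LinearMap.comp_apply] using this
  have p12 : ∀ v, J1 (J2 v) = J3 v := fun v => by
    rw [hJ3]; simp [LinearMap.comp_apply]
  have p21 : ∀ v, J2 (J1 v) = -(J3 v) := fun v => by
    have h := LinearMap.ext_iff.mp hJ12 v
    simp only [LinearMap.comp_apply, LinearMap.neg_apply] at h
    rw [p12 v] at h
    rw [h, neg_neg]
  have p31 : ∀ v, J3 (J1 v) = J2 v := fun v => by
    have h := LinearMap.ext_iff.mp hJ31 v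
    simp only [LinearMap.comp_apply, LinearMap.neg_apply] at h
    -- h : J3 (J1 v) = -(J1 (J3 v))
    rw [h]
    have : J1 (J3 v) = -(J2 v) := by
      rw [hJ3]; simp only [LinearMap.comp_apply]
      rw [show (J1 (J1 (J2 v))) = -(J2 v) from sq1 (J2 v)]
    rw [this, neg_neg]
  -- moving J across the last two slots
  have b1 : ∀ a b c d, R a b (J1 c) d = -R a b c (J1 d) := fun a b c d => by
    have h := hRJ1a a b c (J1 d)
    rw [sq1 d] at h
    simp only [map_neg, LinearMap.neg_apply] at h
    linarith
  have b2 : ∀ a b c d, R a b (J2 c) d = R a b c (J2 d) := fun a b c d => by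
    have h := hRJ2a a b c (J2 d)
    rw [sq2 d] at h
    simp only [map_neg, LinearMap.neg_apply] at h
    linarith
  have b3 : ∀ a b c d, R a b (J3 c) d = R a b c (J3 d) := fun a b c d => by
    have h := hRJ3a a b c (J3 d)
    have sq3 : J3 (J3 d) = -d := by
      have := LinearMap.ext_iff.mp hJ3sq d
      simpa [LinearMap.comp_apply] using this
    rw [sq3] at h
    simp only [map_neg, LinearMap.neg_apply] at h
    linarith
  -- moving J2 across the first two slots
  have f2 : ∀ a b c d, R (J2 a) b c d = R a (J2 b) c d := fun a b c d => by
    have h := hRJ2b (J2 a) b c d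
    rw [sq2 a] at h
    rw [show R (-a) (J2 b) c d = -R a (J2 b) c d by rw [hpair, hpair a]; simp only [map_neg, LinearMap.neg_apply]] at h
    linarith
  intro X Y Z W
  -- the sixteen elementary identities connecting the Bianchi atoms
  have E1 := hRJ2a X Y Z W
  have E2 := hRJ3a X Y Z W
  have E3 := hRJ1b Y Z X W
  have E4 := hRJ2b Y Z X W
  have E5 := hRJ1a Z X Y W
  have E6 := hRJ2a Z X Y W
  have E7 := f2 Y Z X (J2 W)
  have E8 := b2 (J2 Z) X Y W
  have E9 : R (J2 Y) (J1 Z) X (J3 W) = -R Y (J3 Z) X (J3 W) := by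
    have h := f2 Y (J1 Z) X (J3 W)
    rw [p21 Z] at h
    simpa only [map_neg, LinearMap.neg_apply] using h
  have E10 : R (J3 Z) X (J2 Y) (J1 W) = -R (J3 Z) X Y (J3 W) := by
    have h := b2 (J3 Z) X Y (J1 W)
    rw [p21 W] at h
    simpa only [map_neg, LinearMap.neg_apply] using h
  have E11 := b1 X (J1 Y) Z W
  have E12 : R (J2 Y) (J3 Z) X (J1 W) = -R (J1 Y) Z X (J1 W) := by
    have h := hRJ3b (J1 Y) Z X (J1 W)
    rwa [p31 Y] at h
  have E13 : R (J1 Z) X (J2 Y) (J3 W) = -R (J1 Z) X (J1 Y) W := by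
    have h := hRJ3a (J1 Z) X (J1 Y) W
    rwa [p31 Y] at h
  have E14 : R X (J2 Y) (J1 Z) (J3 W) = R X (J2 Y) Z (J2 W) := by
    have h := hRJ1a X (J2 Y) Z (J2 W)
    rwa [p12 W] at h
  have E15 := b2 X (J2 Y) Z W
  have E16 : R X (J2 Y) (J3 Z) (J1 W) = R X (J2 Y) Z (J2 W) := by
    have h := b3 X (J2 Y) Z (J1 W)
    rwa [p31 W] at h
  -- the nine Bianchi instances
  have B1 := hbianchi X Y Z W
  have B2 := hbianchi X Y (J2 Z) (J2 W)
  have B3 := hbianchi X Y (J3 Z) (J3 W)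
  have B4 := hbianchi X (J1 Y) Z (J1 W)
  have B5 := hbianchi X (J1 Y) (J1 Z) W
  have B6 := hbianchi X (J2 Y) Z (J2 W)
  have B7 := hbianchi X (J2 Y) (J1 Z) (J3 W)
  have B8 := hbianchi X (J2 Y) (J2 Z) W
  have B9 := hbianchi X (J2 Y) (J3 Z) (J1 W)
  linarith [E1, E2, E3, E4, E5, E6, E7, E8, E9, E10, E11, E12, E13, E14, E15, E16,
    B1, B2, B3, B4, B5, B6, B7, B8, B9]
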